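/- Let C = P;S be a sorting network on n channels of depth d, and let Q be a comparator network on n channels such that P and Q have the same depth and outputs(Q) ⊆ π(outputs(P)) for some permutation π of {1,…,n}. Then there exists a comparator network S' with the same depth as S such that Q;S' is a sorting network on n channels of depth d. -/

import Mathlib

namespace SN

open scoped Classical

/-- A comparator on `n` channels: a pair of channels. -/
abbrev Comp (n : ℕ) := Fin n × Fin n

/-- A layer is a finite set of comparators. -/
abbrev Layer (n : ℕ) := Finset (Comp n)

/-- A comparator network is a sequence (list) of layers; its depth is the length. -/
abbrev Net (n : ℕ) := List (Layer n)

/-- Each channel is used by at most one comparator of the layer. -/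
def NoOverlap {n : ℕ} (L : Layer n) : Prop :=
  ∀ c ∈ L, ∀ c' ∈ L, c ≠ c' →
    c.1 ≠ c'.1 ∧ c.1 ≠ c'.2 ∧ c.2 ≠ c'.1 ∧ c.2 ≠ c'.2

/-- A (standard) layer: comparators `(i,j)` with `i < j`, channels pairwise disjoint. -/
def IsLayer {n : ℕ} (L : Layer n) : Prop :=
  (∀ c ∈ L, c.1 < c.2) ∧ NoOverlap L

/-- A generalized layer: comparators `(i,j)` with `i ≠ j` allowed in any order. -/
def IsGenLayer {n : ℕ} (L : Layer n) : Prop :=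
  (∀ c ∈ L, c.1 ≠ c.2) ∧ NoOverlap L

def IsNet {n : ℕ} (C : Net n) : Prop := ∀ L ∈ C, IsLayer L

def IsGenNet {n : ℕ} (C : Net n) : Prop := ∀ L ∈ C, IsGenLayer L

/-- Apply one layer to a Boolean vector: a comparator `(i,j)` puts the min
(`&&`) on channel `i` and the max (`||`) on channel `j`. -/
noncomputable def applyLayer {n : ℕ} (L : Layer n) (x : Fin n → Bool) : Fin n → Bool :=
  fun k =>
    if h1 : ∃ c ∈ L, c.1 = k then x h1.choose.1 && x h1.choose.2
    else if h2 : ∃ c ∈ L, c.2 = k then x h2.choose.1 || x h2.choose.2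
    else x k

/-- Run a comparator network on a Boolean input (layers applied in sequence). -/
noncomputable def run {n : ℕ} (C : Net n) (x : Fin n → Bool) : Fin n → Bool :=
  C.foldl (fun y L => applyLayer L y) x

/-- Ascendingly sorted Boolean vector. -/
def BSorted {n : ℕ} (x : Fin n → Bool) : Prop :=
  ∀ i j : Fin n, i ≤ j → x i ≤ x j

/-- A sorting network: a comparator network sorting every Boolean input. -/
def IsSortingNet {n : ℕ} (C : Net n) : Prop :=
  IsNet C ∧ ∀ x : Fin n → Bool, BSorted (run C x)

/-- The set of outputs of a network on all Boolean inputs. -/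
def outputs {n : ℕ} (C : Net n) : Set (Fin n → Bool) := Set.range (run C)

/-- Apply one layer to a vector of naturals. -/
noncomputable def applyLayerN {n : ℕ} (L : Layer n) (x : Fin n → ℕ) : Fin n → ℕ :=
  fun k =>
    if h1 : ∃ c ∈ L, c.1 = k then min (x h1.choose.1) (x h1.choose.2)
    else if h2 : ∃ c ∈ L, c.2 = k then max (x h2.choose.1) (x h2.choose.2)
    else x k

noncomputable def runN {n : ℕ} (C : Net n) (x : Fin n → ℕ) : Fin n → ℕ :=
  C.foldl (fun y L => applyLayerN L y) x

def NSorted {n : ℕ} (x : Fin n → ℕ) : Prop :=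
  ∀ i j : Fin n, i ≤ j → x i ≤ x j

/-- Permute the coordinates of a Boolean vector by `π` (channel `k`'s value
moves to channel `π k`). -/
def permVec {n : ℕ} (π : Equiv.Perm (Fin n)) (x : Fin n → Bool) : Fin n → Bool :=
  fun i => x (π.symm i)

/-- The image of a set of Boolean vectors under coordinate permutation by `π`. -/
def permSet {n : ℕ} (π : Equiv.Perm (Fin n)) (X : Set (Fin n → Bool)) :
    Set (Fin n → Bool) :=
  permVec π '' X

/-- The image `π(L)` of a layer under a permutation of channels. -/
def permLayer {n : ℕ} (π : Equiv.Perm (Fin n)) (L : Layer n) : Layer n :=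
  L.image fun c => (π c.1, π c.2)

/-- Channel `i` is used by some comparator of the layer `L`. -/
def usedIn {n : ℕ} (L : Layer n) (i : Fin n) : Prop := ∃ c ∈ L, c.1 = i ∨ c.2 = i

/-- Channels `i` and `j` are joined by a comparator of `L`. -/
def Joined {n : ℕ} (L : Layer n) (i j : Fin n) : Prop := (i, j) ∈ L ∨ (j, i) ∈ L

/-- `i` is the smaller channel of some comparator of `L` (a min-channel). -/
def MinChan {n : ℕ} (L : Layer n) (i : Fin n) : Prop := ∃ c ∈ L, c.1 = i

/-- `i` is the larger channel of some comparator of `L` (a max-channel). -/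
def MaxChan {n : ℕ} (L : Layer n) (i : Fin n) : Prop := ∃ c ∈ L, c.2 = i

/-- A two-layer network `[L1, L2]` is redundant if some comparator can be removed
so that the outputs of the result are a permutation of the original outputs. -/
def Redundant {n : ℕ} (L1 L2 : Layer n) : Prop :=
  ∃ π : Equiv.Perm (Fin n),
    (∃ c ∈ L1, outputs [L1.erase c, L2] = permSet π (outputs [L1, L2])) ∨
    (∃ c ∈ L2, outputs [L1, L2.erase c] = permSet π (outputs [L1, L2]))

/-- A two-layer network `[L1, L2]` is saturated if it is non-redundant and no
comparator on two channels unused in the second layer can be added to the second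
layer so as to make the output set a proper subset of a permutation of the
original output set. -/
def Saturated {n : ℕ} (L1 L2 : Layer n) : Prop :=
  ¬ Redundant L1 L2 ∧
  ¬ ∃ (c : Comp n) (π : Equiv.Perm (Fin n)),
      c.1 < c.2 ∧ ¬ usedIn L2 c.1 ∧ ¬ usedIn L2 c.2 ∧
      outputs [L1, insert c L2] ⊂ permSet π (outputs [L1, L2])

/-- Vertices of the graph representation of `C`: the comparators of `C`,
tagged with the index of the layer containing them. -/
def Vertex {n : ℕ} (C : Net n) := {p : ℕ × Comp n // p.2 ∈ C.getD p.1 ∅}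

/-- The channel carrying the min output (`b = false`, label 1) or max output
(`b = true`, label 2) of a comparator. -/
def outChan {n : ℕ} (c : Comp n) (b : Bool) : Fin n := if b then c.2 else c.1

/-- An edge with label `b` (1 for min, 2 for max) from comparator `u` to
comparator `v`: the corresponding output of `u` is an input of `v`, i.e. `v`
is the next comparator on that channel. -/
def Edge {n : ℕ} (C : Net n) (b : Bool) (u v : ℕ × Comp n) : Prop :=
  u.1 < v.1 ∧ (outChan u.2 b = v.2.1 ∨ outChan u.2 b = v.2.2) ∧
  ∀ m, u.1 < m → m < v.1 → ¬ usedIn (C.getD m ∅) (outChan u.2 b)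

/-- The graph representations of `C` and `D` are isomorphic: a bijection of
comparators preserving the labeled edges. -/
def GraphIso {n m : ℕ} (C : Net n) (D : Net m) : Prop :=
  ∃ f : Vertex C ≃ Vertex D,
    ∀ (b : Bool) (u v : Vertex C),
      Edge C b u.val v.val ↔ Edge D b (f u).val (f v).val

/-- The graph representation of `C` is connected. -/
def GraphConnected {n : ℕ} (C : Net n) : Prop :=
  ∀ u v : Vertex C,
    Relation.ReflTransGen
      (fun a b : Vertex C => ∃ ℓ : Bool, Edge C ℓ a.val b.val ∨ Edge C ℓ b.val a.val) u v

/-- Reflection of a comparator: `(i,j) ↦ (n-j+1, n-i+1)` (in 1-based terms). -/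
def reflectComp {n : ℕ} (c : Comp n) : Comp n := (c.2.rev, c.1.rev)

def reflectLayer {n : ℕ} (L : Layer n) : Layer n := L.image reflectComp

/-- Reflection `C^R` of a comparator network. -/
def reflect {n : ℕ} (C : Net n) : Net n := C.map reflectLayer

/-- The first layer `F_n = {(2i-1, 2i) : 1 ≤ i ≤ ⌊n/2⌋}` (0-indexed: `(2i, 2i+1)`). -/
def FLayer (n : ℕ) : Layer n :=
  Finset.univ.filter fun c : Comp n => c.1.val % 2 = 0 ∧ c.2.val = c.1.val + 1

/-- The two-layer networks with first layer `F_n`, parametrized by second layer. -/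
def SecondLayers (n : ℕ) := {L : Layer n // IsLayer L}

/-- The number `|R(G_n)|` of equivalence classes of two-layer networks with
first layer `F_n`, under graph isomorphism `≈`. -/
noncomputable def numClasses (n : ℕ) : ℕ :=
  Nat.card (Quot fun L L' : SecondLayers n =>
    GraphIso ([FLayer n, L.val] : Net n) ([FLayer n, L'.val] : Net n))

/-- Redundant two-layer networks with first layer `F_n`. -/
def RedLayers (n : ℕ) := {L : Layer n // IsLayer L ∧ Redundant (FLayer n) L}

/-- The number of equivalence classes of redundant two-layer networks with
first layer `F_n`, under graph isomorphism `≈`. -/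
noncomputable def numRedClasses (n : ℕ) : ℕ :=
  Nat.card (Quot fun L L' : RedLayers n =>
    GraphIso ([FLayer n, L.val] : Net n) ([FLayer n, L'.val] : Net n))

/-! ### Auxiliary material for Statement 9 -/

section Aux

variable {n : ℕ}

lemma uniq_of_shared {L : Layer n} (hL : IsLayer L) {c c' : Comp n}
    (hc : c ∈ L) (hc' : c' ∈ L)
    (h : c.1 = c'.1 ∨ c.1 = c'.2 ∨ c.2 = c'.1 ∨ c.2 = c'.2) : c = c' := by
  by_contra hne
  obtain ⟨h1, h2, h3, h4⟩ := hL.2 c hc c' hc' hne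
  tauto

lemma applyLayer_fst {L : Layer n} (hL : IsLayer L) {c : Comp n} (hc : c ∈ L)
    (x : Fin n → Bool) : applyLayer L x c.1 = (x c.1 && x c.2) := by
  have h1 : ∃ d ∈ L, d.1 = c.1 := ⟨c, hc, rfl⟩
  have hspec := h1.choose_spec
  have hcc : h1.choose = c := uniq_of_shared hL hspec.1 hc (Or.inl hspec.2)
  unfold applyLayer
  rw [dif_pos h1, hcc]

lemma applyLayer_snd {L : Layer n} (hL : IsLayer L) {c : Comp n} (hc : c ∈ L)
    (x : Fin n → Bool) : applyLayer L x c.2 = (x c.1 || x c.2) := by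
  have h1 : ¬ ∃ d ∈ L, d.1 = c.2 := by
    rintro ⟨d, hd, hd2⟩
    have : d = c := uniq_of_shared hL hd hc (Or.inr (Or.inl hd2))
    subst this
    exact absurd hd2 (ne_of_lt (hL.1 d hd))
  have h2 : ∃ d ∈ L, d.2 = c.2 := ⟨c, hc, rfl⟩
  have hspec := h2.choose_spec
  have hcc : h2.choose = c :=
    uniq_of_shared hL hspec.1 hc (Or.inr (Or.inr (Or.inr hspec.2)))
  unfold applyLayer
  rw [dif_neg h1, dif_pos h2, hcc]

lemma applyLayer_unused {L : Layer n} {k : Fin n} (h : ¬ usedIn L k)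
    (x : Fin n → Bool) : applyLayer L x k = x k := by
  have h1 : ¬ ∃ d ∈ L, d.1 = k := by
    rintro ⟨d, hd, hd1⟩; exact h ⟨d, hd, Or.inl hd1⟩
  have h2 : ¬ ∃ d ∈ L, d.2 = k := by
    rintro ⟨d, hd, hd2⟩; exact h ⟨d, hd, Or.inr hd2⟩
  unfold applyLayer
  rw [dif_neg h1, dif_neg h2]

/-- The number of `true` entries of a Boolean vector. -/
noncomputable def bwt (x : Fin n → Bool) : ℕ :=
  (Finset.univ.filter fun i => x i = true).card

lemma bwt_lt {x y : Fin n → Bool} (hx : BSorted x) (hy : BSorted y) {i : Fin n}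
    (hxi : x i = true) (hyi : y i = false) : bwt y < bwt x := by
  have h1 : Finset.Ici i ⊆ Finset.univ.filter fun j => x j = true := by
    intro j hj
    simp only [Finset.mem_filter, Finset.mem_univ, true_and]
    have hle := hx i j (Finset.mem_Ici.mp hj)
    rw [hxi] at hle
    revert hle; cases x j <;> simp
  have h2 : (Finset.univ.filter fun j => y j = true) ⊆ Finset.Ioi i := by
    intro j hj
    simp only [Finset.mem_filter, Finset.mem_univ, true_and] at hj
    simp only [Finset.mem_Ioi]
    by_contra hij
    have hle := hy j i (le_of_not_gt hij)
    rw [hj, hyi] at hle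
    exact absurd hle (by decide)
  calc bwt y ≤ (Finset.Ioi i).card := Finset.card_le_card h2
    _ < (Finset.Ici i).card := by
        rw [Finset.Ici_eq_cons_Ioi, Finset.card_cons]; omega
    _ ≤ bwt x := Finset.card_le_card h1

lemma bsorted_eq {x y : Fin n → Bool} (hx : BSorted x) (hy : BSorted y)
    (h : bwt x = bwt y) : x = y := by
  funext i
  cases hxi : x i <;> cases hyi : y i
  · rfl
  · exact absurd h (ne_of_lt (bwt_lt hy hx hyi hxi))
  · exact absurd h (ne_of_gt (bwt_lt hx hy hxi hyi))
  · rfl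

lemma bwt_permVec (ρ : Equiv.Perm (Fin n)) (x : Fin n → Bool) :
    bwt (permVec ρ x) = bwt x := by
  unfold bwt permVec
  exact Finset.card_equiv ρ.symm (by intro j; simp)

lemma permVec_injective (ρ : Equiv.Perm (Fin n)) :
    Function.Injective (permVec (n := n) ρ) := by
  intro x y h
  funext i
  have := congrFun h (ρ i)
  simpa [permVec] using this

lemma run_nil (x : Fin n → Bool) : run ([] : Net n) x = x := rfl

lemma run_cons (L : Layer n) (T : Net n) (x : Fin n → Bool) :
    run (L :: T) x = run T (applyLayer L x) := rfl

lemma run_append (A B : Net n) (x : Fin n → Bool) :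
    run (A ++ B) x = run B (run A x) := by
  unfold run
  exact List.foldl_append

lemma applyLayer_sorted {L : Layer n} (hL : IsLayer L) {s : Fin n → Bool}
    (hs : BSorted s) : applyLayer L s = s := by
  funext k
  by_cases h1 : ∃ c ∈ L, c.1 = k
  · obtain ⟨c, hc, rfl⟩ := h1
    rw [applyLayer_fst hL hc]
    have hle := hs c.1 c.2 (le_of_lt (hL.1 c hc))
    revert hle; cases hc1 : s c.1 <;> cases hc2 : s c.2 <;> simp
  · by_cases h2 : ∃ c ∈ L, c.2 = k
    · obtain ⟨c, hc, rfl⟩ := h2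
      rw [applyLayer_snd hL hc]
      have hle := hs c.1 c.2 (le_of_lt (hL.1 c hc))
      revert hle; cases hc1 : s c.1 <;> cases hc2 : s c.2 <;> simp
    · refine applyLayer_unused ?_ s
      rintro ⟨c, hc, hor⟩
      exact hor.elim (fun h => h1 ⟨c, hc, h⟩) (fun h => h2 ⟨c, hc, h⟩)

lemma run_sorted {C : Net n} (hC : IsNet C) {s : Fin n → Bool}
    (hs : BSorted s) : run C s = s := by
  induction C with
  | nil => rfl
  | cons L T ih =>
    rw [run_cons, applyLayer_sorted (hC L List.mem_cons_self) hs]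
    exact ih fun M hM => hC M (List.mem_cons_of_mem _ hM)

lemma min_eq_max_imp {α : Type*} [LinearOrder α] {u v : α}
    (h : min u v = max u v) : u = v := by
  have h1 := le_max_left u v
  have h2 := le_max_right u v
  rw [← h] at h1 h2
  exact le_antisymm (h1.trans (min_le_right u v)) (h2.trans (min_le_left u v))

lemma exists_conj_layer (L : Layer n) (hL : IsLayer L) (ρ : Equiv.Perm (Fin n)) :
    ∃ (L' : Layer n) (ρ' : Equiv.Perm (Fin n)), IsLayer L' ∧
      ∀ x : Fin n → Bool, applyLayer L (permVec ρ x) = permVec ρ' (applyLayer L' x) := by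
  classical
  set g : Comp n → Comp n := fun c =>
    if ρ.symm c.1 < ρ.symm c.2 then (ρ.symm c.1, ρ.symm c.2)
    else (ρ.symm c.2, ρ.symm c.1) with hg
  set L' : Layer n := L.image g with hL'def
  have hgcases : ∀ c : Comp n, c.1 < c.2 →
      (g c = (ρ.symm c.1, ρ.symm c.2) ∧ ρ.symm c.1 < ρ.symm c.2) ∨
      (g c = (ρ.symm c.2, ρ.symm c.1) ∧ ρ.symm c.2 < ρ.symm c.1) := by
    intro c hc
    have hab : ρ.symm c.1 ≠ ρ.symm c.2 := fun h =>
      absurd (ρ.symm.injective h) (ne_of_lt hc)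
    simp only [hg]
    split_ifs with h
    · exact Or.inl ⟨rfl, h⟩
    · exact Or.inr ⟨rfl, lt_of_le_of_ne (le_of_not_gt h) hab.symm⟩
  have hL' : IsLayer L' := by
    constructor
    · intro c'' hc''
      obtain ⟨c, hcL, rfl⟩ := Finset.mem_image.mp hc''
      rcases hgcases c (hL.1 c hcL) with ⟨he, hlt⟩ | ⟨he, hlt⟩ <;> rw [he] <;> exact hlt
    · intro c'' hc'' c''' hc''' hne
      obtain ⟨c, hcL, rfl⟩ := Finset.mem_image.mp hc''
      obtain ⟨c', hc'L, rfl⟩ := Finset.mem_image.mp hc'''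
      have hcc' : c ≠ c' := fun h => hne (by rw [h])
      obtain ⟨q1, q2, q3, q4⟩ := hL.2 c hcL c' hc'L hcc'
      rcases hgcases c (hL.1 c hcL) with ⟨he, _⟩ | ⟨he, _⟩ <;>
        rcases hgcases c' (hL.1 c' hc'L) with ⟨he', _⟩ | ⟨he', _⟩ <;>
        rw [he, he'] <;>
        refine ⟨?_, ?_, ?_, ?_⟩ <;>
        simp only [ne_eq, EmbeddingLike.apply_eq_iff_eq] <;>
        tauto
  -- the channel relabeling
  set e : Fin n → Fin n := fun k =>
    if h : ∃ c ∈ L, c.1 = k ∨ c.2 = k then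
      (if h.choose.1 = k then min (ρ.symm h.choose.1) (ρ.symm h.choose.2)
       else max (ρ.symm h.choose.1) (ρ.symm h.choose.2))
    else ρ.symm k with he_def
  have he1 : ∀ c ∈ L, e c.1 = min (ρ.symm c.1) (ρ.symm c.2) := by
    intro c hc
    have h : ∃ d ∈ L, d.1 = c.1 ∨ d.2 = c.1 := ⟨c, hc, Or.inl rfl⟩
    have hspec := h.choose_spec
    have hcc : h.choose = c := uniq_of_shared hL hspec.1 hc (by tauto)
    simp only [he_def]
    rw [dif_pos h, hcc, if_pos rfl]
  have he2 : ∀ c ∈ L, e c.2 = max (ρ.symm c.1) (ρ.symm c.2) := by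
    intro c hc
    have h : ∃ d ∈ L, d.1 = c.2 ∨ d.2 = c.2 := ⟨c, hc, Or.inr rfl⟩
    have hspec := h.choose_spec
    have hcc : h.choose = c := uniq_of_shared hL hspec.1 hc (by tauto)
    have hne : c.1 ≠ c.2 := ne_of_lt (hL.1 c hc)
    simp only [he_def]
    rw [dif_pos h, hcc, if_neg hne]
  have heu : ∀ k, ¬ usedIn L k → e k = ρ.symm k := by
    intro k hk
    have hk2 : ¬ ∃ c ∈ L, c.1 = k ∨ c.2 = k := hk
    simp only [he_def]
    rw [dif_neg hk2]
  have hrange : ∀ {k : Fin n} {c : Comp n}, c ∈ L → (c.1 = k ∨ c.2 = k) →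
      e k = ρ.symm c.1 ∨ e k = ρ.symm c.2 := by
    rintro k c hc (rfl | rfl)
    · rw [he1 c hc]; exact min_choice _ _
    · rw [he2 c hc]; exact max_choice _ _
  have hinj : Function.Injective e := by
    intro k k' hkk'
    by_cases hk : ∃ c ∈ L, c.1 = k ∨ c.2 = k
    · by_cases hk' : ∃ c ∈ L, c.1 = k' ∨ c.2 = k'
      · obtain ⟨c, hcL, hck⟩ := hk
        obtain ⟨c', hc'L, hck'⟩ := hk'
        have h1 := hrange hcL hck
        have h2 := hrange hc'L hck'
        have hcc' : c = c' := by
          apply uniq_of_shared hL hcL hc'L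
          rcases h1 with h1 | h1 <;> rcases h2 with h2 | h2 <;>
            rw [hkk', h2] at h1 <;>
            [exact Or.inl (ρ.symm.injective h1.symm);
             exact Or.inr (Or.inl (ρ.symm.injective h1.symm));
             exact Or.inr (Or.inr (Or.inl (ρ.symm.injective h1.symm)));
             exact Or.inr (Or.inr (Or.inr (ρ.symm.injective h1.symm)))]
        subst hcc'
        have hne : c.1 ≠ c.2 := ne_of_lt (hL.1 c hcL)
        rcases hck with rfl | rfl <;> rcases hck' with rfl | rfl
        · rfl
        · rw [he1 c hcL, he2 c hcL] at hkk'
          exact absurd (ρ.symm.injective (min_eq_max_imp hkk')) hne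
        · rw [he1 c hcL, he2 c hcL] at hkk'
          exact absurd (ρ.symm.injective (min_eq_max_imp hkk'.symm)) hne
        · rfl
      · obtain ⟨c, hcL, hck⟩ := hk
        have h1 := hrange hcL hck
        rw [hkk', heu k' hk'] at h1
        exfalso
        rcases h1 with h1 | h1
        · exact hk' ⟨c, hcL, Or.inl (ρ.symm.injective h1.symm)⟩
        · exact hk' ⟨c, hcL, Or.inr (ρ.symm.injective h1.symm)⟩
    · by_cases hk' : ∃ c ∈ L, c.1 = k' ∨ c.2 = k'
      · obtain ⟨c, hcL, hck⟩ := hk'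
        have h1 := hrange hcL hck
        rw [← hkk', heu k hk] at h1
        exfalso
        rcases h1 with h1 | h1
        · exact hk ⟨c, hcL, Or.inl (ρ.symm.injective h1.symm)⟩
        · exact hk ⟨c, hcL, Or.inr (ρ.symm.injective h1.symm)⟩
      · rw [heu k hk, heu k' hk'] at hkk'
        exact ρ.symm.injective hkk'
  have hbij : Function.Bijective e := Finite.injective_iff_bijective.mp hinj
  refine ⟨L', (Equiv.ofBijective e hbij).symm, hL', ?_⟩
  intro x
  funext k
  have hperm : ∀ y : Fin n → Bool,
      permVec (Equiv.ofBijective e hbij).symm y k = y (e k) := by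
    intro y
    simp [permVec, Equiv.ofBijective]
  rw [hperm]
  have hpv : ∀ i, permVec ρ x i = x (ρ.symm i) := fun i => rfl
  by_cases hk : ∃ c ∈ L, c.1 = k ∨ c.2 = k
  · obtain ⟨c, hcL, hck⟩ := hk
    have hgc : g c ∈ L' := Finset.mem_image_of_mem g hcL
    rcases hck with rfl | rfl
    · rw [applyLayer_fst hL hcL, hpv, hpv, he1 c hcL]
      rcases hgcases c (hL.1 c hcL) with ⟨hge, hlt⟩ | ⟨hge, hlt⟩
      · rw [min_eq_left (le_of_lt hlt)]
        exact (applyLayer_fst hL' (hge ▸ hgc) x).symm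
      · rw [min_eq_right (le_of_lt hlt)]
        rw [Bool.and_comm]
        exact (applyLayer_fst hL' (hge ▸ hgc) x).symm
    · rw [applyLayer_snd hL hcL, hpv, hpv, he2 c hcL]
      rcases hgcases c (hL.1 c hcL) with ⟨hge, hlt⟩ | ⟨hge, hlt⟩
      · rw [max_eq_right (le_of_lt hlt)]
        exact (applyLayer_snd hL' (hge ▸ hgc) x).symm
      · rw [max_eq_left (le_of_lt hlt)]
        rw [Bool.or_comm]
        exact (applyLayer_snd hL' (hge ▸ hgc) x).symm
  · rw [applyLayer_unused hk, hpv, heu k hk]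
    have hk' : ¬ usedIn L' (ρ.symm k) := by
      rintro ⟨c'', hc'', hor⟩
      obtain ⟨c, hcL, rfl⟩ := Finset.mem_image.mp hc''
      apply hk
      rcases hgcases c (hL.1 c hcL) with ⟨hge, _⟩ | ⟨hge, _⟩ <;>
        rw [hge] at hor <;>
        rcases hor with h | h
      · exact ⟨c, hcL, Or.inl (ρ.symm.injective h)⟩
      · exact ⟨c, hcL, Or.inr (ρ.symm.injective h)⟩
      · exact ⟨c, hcL, Or.inr (ρ.symm.injective h)⟩
      · exact ⟨c, hcL, Or.inl (ρ.symm.injective h)⟩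
    rw [applyLayer_unused hk']

lemma key_lemma : ∀ (S : Net n), IsNet S → ∀ (ρ : Equiv.Perm (Fin n))
    (X : Set (Fin n → Bool)),
    (∀ s : Fin n → Bool, BSorted s → s ∈ X) →
    (∀ x ∈ X, BSorted (run S (permVec ρ x))) →
    ∃ S' : Net n, S'.length = S.length ∧ IsNet S' ∧
      ∀ x ∈ X, BSorted (run S' x) := by
  intro S
  induction S with
  | nil =>
    intro _ ρ X hX h
    refine ⟨[], rfl, by intro L hL; simp at hL, ?_⟩
    intro x hx
    have hs : BSorted (permVec ρ x) := h x hx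
    have hsX : permVec ρ x ∈ X := hX _ hs
    have hs2 : BSorted (permVec ρ (permVec ρ x)) := h _ hsX
    have heq : permVec ρ (permVec ρ x) = permVec ρ x :=
      bsorted_eq hs2 hs (bwt_permVec ρ _)
    have hxx : permVec ρ x = x := permVec_injective ρ heq
    rw [run_nil]
    rw [← hxx]
    exact hs
  | cons L T ih =>
    intro hNet ρ X hX h
    have hLlay : IsLayer L := hNet L List.mem_cons_self
    have hTnet : IsNet T := fun M hM => hNet M (List.mem_cons_of_mem _ hM)
    obtain ⟨L', ρ', hL', hconj⟩ := exists_conj_layer L hLlay ρ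
    obtain ⟨S'', hlen, hnet'', hsort⟩ :=
      ih hTnet ρ' (applyLayer L' '' X)
        (fun s hs => ⟨s, hX s hs, applyLayer_sorted hL' hs⟩)
        (by
          rintro x' ⟨x, hx, rfl⟩
          have := h x hx
          rw [run_cons, hconj x] at this
          exact this)
    refine ⟨L' :: S'', by simpa using hlen, ?_, ?_⟩
    · intro M hM
      rcases List.mem_cons.mp hM with rfl | hM
      · exact hL'
      · exact hnet'' M hM
    · intro x hx
      rw [run_cons]
      exact hsort _ ⟨x, hx, rfl⟩

end Aux

/-- if `P;S` is a sorting network of depth d and `Q` has the same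
depth as `P` with `outputs(Q) ⊆ π(outputs(P))` for some permutation `π`, then
there is `S'` of the same depth as `S` such that `Q;S'` is a sorting network
(of depth d). -/
theorem subsumption_perm {n : ℕ} (P S Q : Net n) (π : Equiv.Perm (Fin n))
    (hPS : IsSortingNet (P ++ S)) (hQ : IsNet Q)
    (hdepth : Q.length = P.length)
    (hsub : outputs Q ⊆ permSet π (outputs P)) :
    ∃ S' : Net n, S'.length = S.length ∧ IsSortingNet (Q ++ S') := by
  have hSnet : IsNet S := fun L hL => hPS.1 L (by simp [hL])
  obtain ⟨S', hlen, hnet, hsort⟩ := key_lemma S hSnet π⁻¹ (outputs Q)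
    (fun s hs => ⟨s, run_sorted hQ hs⟩)
    (by
      intro x hx
      obtain ⟨y, hy, hxy⟩ := hsub hx
      have hyx : permVec π⁻¹ x = y := by
        funext i
        rw [← hxy]
        simp [permVec, Equiv.Perm.inv_def]
      rw [hyx]
      obtain ⟨z, hz⟩ := hy
      have := hPS.2 z
      rw [run_append] at this
      rw [← hz]
      exact this)
  refine ⟨S', hlen, ⟨?_, ?_⟩⟩
  · intro M hM
    rcases List.mem_append.mp hM with hM | hM
    · exact hQ M hM
    · exact hnet M hM
  · intro x
    rw [run_append]
    exact hsort _ ⟨x, rfl⟩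

end SN
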